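/- Let φ(x) = exp(−x²/2)/√(2π) be the standard normal density and Φ its cumulative distribution function. Then for every c > 0, 1 − 2cφ(c) + 2(c² − 1)Φ(−c) > (1 − 2Φ(−c))²; equivalently, G(c) = (1 − 2cφ(c) + 2(c² − 1)Φ(−c)) / (1 − 2Φ(−c))² > 1. -/

import Mathlib

open MeasureTheory

/-- The standard normal density φ(x) = exp(−x²/2)/√(2π). -/
noncomputable def stdPdf (x : ℝ) : ℝ := Real.exp (-x ^ 2 / 2) / Real.sqrt (2 * Real.pi)

/-- The standard normal cumulative distribution function Φ(x) = ∫_{−∞}^x φ. -/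
noncomputable def stdCdf (x : ℝ) : ℝ := ∫ t in Set.Iic x, stdPdf t

/-- G(c): the asymptotic variance of the Huber M-estimate of location with
tuning constant c, under standard normal errors. -/
noncomputable def huberVar (c : ℝ) : ℝ :=
  (1 - 2 * c * stdPdf c + 2 * (c ^ 2 - 1) * stdCdf (-c)) / (1 - 2 * stdCdf (-c)) ^ 2

section Aux
open Set Real Filter

lemma stdPdf_eq (x : ℝ) : stdPdf x = Real.exp (-(1/2) * x ^ 2) * (Real.sqrt (2 * Real.pi))⁻¹ := by
  rw [stdPdf]; ring_nf

lemma stdPdf_pos (x : ℝ) : 0 < stdPdf x := by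
  rw [stdPdf]; positivity

lemma sqrt_two_pi_pos : 0 < Real.sqrt (2 * Real.pi) := by positivity

lemma int_pdf : Integrable stdPdf := by
  rw [show stdPdf = fun x => Real.exp (-(1/2) * x ^ 2) * (Real.sqrt (2 * Real.pi))⁻¹ from
    funext stdPdf_eq]
  exact (integrable_exp_neg_mul_sq (by norm_num)).mul_const _

lemma int_x_pdf : Integrable (fun x => x * stdPdf x) := by
  simp_rw [stdPdf_eq, ← mul_assoc]
  exact (integrable_mul_exp_neg_mul_sq (by norm_num)).mul_const _

lemma int_x2_pdf : Integrable (fun x => x ^ 2 * stdPdf x) := by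
  simp_rw [stdPdf_eq, ← mul_assoc]
  have h := integrable_rpow_mul_exp_neg_mul_sq (b := 1/2) (by norm_num) (s := 2) (by norm_num)
  simp_rw [show ((2:ℝ)) = ((2:ℕ):ℝ) by norm_num, Real.rpow_natCast] at h
  exact h.mul_const _

lemma total_pdf : ∫ x, stdPdf x = 1 := by
  simp_rw [stdPdf_eq]
  rw [integral_mul_const, integral_gaussian]
  rw [show Real.pi / (1/2) = 2 * Real.pi by ring]
  exact mul_inv_cancel₀ (ne_of_gt sqrt_two_pi_pos)

lemma hasDerivAt_stdPdf (x : ℝ) : HasDerivAt stdPdf (-x * stdPdf x) x := by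
  have h1 : HasDerivAt (fun t : ℝ => -t ^ 2 / 2) (-x) x := by
    have := ((hasDerivAt_pow 2 x).neg).div_const 2
    simpa using this.congr_deriv (by ring)
  have h2 := (h1.exp).div_const (Real.sqrt (2 * Real.pi))
  have h3 : Real.exp (-x ^ 2 / 2) * (-x) / Real.sqrt (2 * Real.pi) = -x * stdPdf x := by
    rw [stdPdf]; ring
  exact h3 ▸ h2

lemma tendsto_stdPdf : Tendsto stdPdf atTop (nhds 0) := by
  have h0 : Tendsto (fun x : ℝ => x ^ 2 / 2) atTop atTop :=
    (tendsto_pow_atTop (by norm_num)).atTop_div_const (by norm_num)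
  have h : Tendsto (fun x : ℝ => -x ^ 2 / 2) atTop atBot := by
    have := Filter.tendsto_neg_atTop_atBot.comp h0
    simpa [Function.comp_def, neg_div] using this
  have h2 := (Real.tendsto_exp_atBot.comp h).div_const (Real.sqrt (2 * Real.pi))
  simp only [Function.comp_def, zero_div] at h2
  exact h2

lemma tendsto_x_stdPdf : Tendsto (fun x => x * stdPdf x) atTop (nhds 0) := by
  have hb : Tendsto (fun x : ℝ => x * Real.exp (-x)) atTop (nhds 0) := by
    simpa using Real.tendsto_pow_mul_exp_neg_atTop_nhds_zero 1
  apply tendsto_of_tendsto_of_tendsto_of_le_of_le' tendsto_const_nhds hb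
  · filter_upwards [eventually_ge_atTop (0:ℝ)] with x hx
    exact mul_nonneg hx (stdPdf_pos x).le
  · filter_upwards [eventually_ge_atTop (2:ℝ)] with x hx
    have h1 : stdPdf x ≤ Real.exp (-x) := by
      rw [stdPdf]
      have h2 : Real.exp (-x ^ 2 / 2) ≤ Real.exp (-x) := by
        apply Real.exp_le_exp.2; nlinarith
      have h3 : (1:ℝ) ≤ Real.sqrt (2 * Real.pi) := by
        rw [show (1:ℝ) = Real.sqrt 1 by simp]
        apply Real.sqrt_le_sqrt; nlinarith [Real.pi_gt_three]
      calc Real.exp (-x ^ 2 / 2) / Real.sqrt (2 * Real.pi)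
          ≤ Real.exp (-x ^ 2 / 2) / 1 := by
            apply div_le_div_of_nonneg_left (Real.exp_pos _).le (by norm_num) h3
        _ ≤ Real.exp (-x) := by simpa using h2
    exact mul_le_mul_of_nonneg_left h1 (by linarith)

lemma stdPdf_even (x : ℝ) : stdPdf (-x) = stdPdf x := by rw [stdPdf, stdPdf, neg_pow]; ring_nf

/-- Monotonicity: if x² ≤ y² then φ(y) ≤ φ(x). -/
lemma stdPdf_anti {x y : ℝ} (h : x ^ 2 ≤ y ^ 2) : stdPdf y ≤ stdPdf x := by
  rw [stdPdf, stdPdf]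
  gcongr

lemma stdPdf_anti_strict {x y : ℝ} (h : x ^ 2 < y ^ 2) : stdPdf y < stdPdf x := by
  rw [stdPdf, stdPdf]
  gcongr

/-- symmetry: Φ(-c) equals the right tail. -/
lemma cdf_neg_eq_tail (c : ℝ) : stdCdf (-c) = ∫ x in Ioi c, stdPdf x := by
  rw [stdCdf]
  have h := integral_comp_neg_Iic (-c) stdPdf
  simp_rw [stdPdf_even, neg_neg] at h
  exact h

/-- ∫_{c}^∞ x φ(x) dx = φ(c) -/
lemma tail_x (c : ℝ) : ∫ x in Ioi c, x * stdPdf x = stdPdf c := by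
  have h := integral_Ioi_of_hasDerivAt_of_tendsto' (a := c) (f := fun t => -stdPdf t)
    (f' := fun x => x * stdPdf x) (m := 0)
    (fun x _ => by have h := (hasDerivAt_stdPdf x).neg; rw [neg_mul, neg_neg] at h; exact h)
    int_x_pdf.integrableOn (by simpa using tendsto_stdPdf.neg)
  simpa using h

/-- ∫_{c}^∞ x² φ(x) dx = c φ(c) + tail. -/
lemma tail_x2 (c : ℝ) : ∫ x in Ioi c, x ^ 2 * stdPdf x
    = c * stdPdf c + ∫ x in Ioi c, stdPdf x := by
  have hder : ∀ x : ℝ, HasDerivAt (fun t => -(t * stdPdf t))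
      ((x ^ 2 - 1) * stdPdf x) x := by
    intro x
    have h : HasDerivAt (fun t => -(t * stdPdf t)) (-(1 * stdPdf x + x * (-x * stdPdf x))) x :=
      ((hasDerivAt_id x).mul (hasDerivAt_stdPdf x)).neg
    convert h using 1
    ring
  have hint : IntegrableOn (fun x => (x ^ 2 - 1) * stdPdf x) (Ioi c) := by
    have := (int_x2_pdf.sub int_pdf).integrableOn (s := Ioi c)
    exact this.congr_fun (fun x _ => by simp [Pi.sub_apply]; ring) measurableSet_Ioi
  have h := integral_Ioi_of_hasDerivAt_of_tendsto' (a := c)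
    (f' := fun x => (x ^ 2 - 1) * stdPdf x) (m := 0)
    (fun x _ => hder x) hint (by simpa using tendsto_x_stdPdf.neg)
  have h2 : ∫ x in Ioi c, (x ^ 2 - 1) * stdPdf x
      = (∫ x in Ioi c, x ^ 2 * stdPdf x) - ∫ x in Ioi c, stdPdf x := by
    rw [← integral_sub int_x2_pdf.integrableOn int_pdf.integrableOn]
    exact integral_congr_ae (Eventually.of_forall (fun x => by ring))
  rw [h2] at h
  linarith [h]

end Aux

/-- for every c > 0 the numerator of G(c) strictly exceeds its
denominator; equivalently G(c) > 1. -/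
theorem stmt_14 (c : ℝ) (hc : 0 < c) :
    (1 - 2 * stdCdf (-c)) ^ 2 < 1 - 2 * c * stdPdf c + 2 * (c ^ 2 - 1) * stdCdf (-c) ∧
    1 < huberVar c := by
  open Set Real Filter in
  set p := stdPdf c with hp_def
  set q := stdCdf (-c) with hq_def
  have hp : 0 < p := stdPdf_pos c
  have e1 : ∫ x in Ioi c, stdPdf x = q := (cdf_neg_eq_tail c).symm
  -- integrability on the tail
  have i0 : IntegrableOn stdPdf (Ioi c) := int_pdf.integrableOn
  have i1 : IntegrableOn (fun x => x * stdPdf x) (Ioi c) := int_x_pdf.integrableOn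
  have i2 : IntegrableOn (fun x => x ^ 2 * stdPdf x) (Ioi c) := int_x2_pdf.integrableOn
  have iB : IntegrableOn (fun x => (x - c) * stdPdf x) (Ioi c) := by
    have := (int_x_pdf.sub (int_pdf.const_mul c)).integrableOn (s := Ioi c)
    exact this.congr_fun (fun x _ => by simp [Pi.sub_apply]; ring) measurableSet_Ioi
  have iR : IntegrableOn (fun x => (x - c) ^ 2 * stdPdf x) (Ioi c) := by
    have := ((int_x2_pdf.sub ((int_x_pdf.const_mul (2 * c)))).add
      (int_pdf.const_mul (c ^ 2))).integrableOn (s := Ioi c)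
    exact this.congr_fun (fun x _ => by simp [Pi.sub_apply, Pi.add_apply]; ring) measurableSet_Ioi
  -- q > 0
  have hsupp : Function.support stdPdf = univ :=
    Set.eq_univ_of_forall (fun x => (stdPdf_pos x).ne')
  have hq_pos : 0 < q := by
    rw [← e1]
    rw [setIntegral_pos_iff_support_of_nonneg_ae
      (Filter.Eventually.of_forall (fun x => (stdPdf_pos x).le)) i0]
    rw [hsupp, Set.univ_inter]
    simp [Real.volume_Ioi]
  -- the value B = ∫ (x-c)φ = p - c q
  have hB : ∫ x in Ioi c, (x - c) * stdPdf x = p - c * q := by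
    have : ∫ x in Ioi c, (x - c) * stdPdf x
        = (∫ x in Ioi c, x * stdPdf x) - ∫ x in Ioi c, c * stdPdf x := by
      rw [← integral_sub i1 (i0.const_mul c)]
      exact integral_congr_ae (Filter.Eventually.of_forall (fun x => by ring))
    rw [this, tail_x, integral_const_mul, e1]
  -- the value R = ∫ (x-c)²φ = (1+c²) q - c p
  have hR : ∫ x in Ioi c, (x - c) ^ 2 * stdPdf x = (1 + c ^ 2) * q - c * p := by
    have : ∫ x in Ioi c, (x - c) ^ 2 * stdPdf x
        = ((∫ x in Ioi c, x ^ 2 * stdPdf x) - ∫ x in Ioi c, (2 * c) * (x * stdPdf x))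
          + ∫ x in Ioi c, c ^ 2 * stdPdf x := by
      have iS : IntegrableOn (fun x => x ^ 2 * stdPdf x - 2 * c * (x * stdPdf x)) (Ioi c) :=
        i2.sub (i1.const_mul (2 * c))
      have iC : IntegrableOn (fun x : ℝ => c ^ 2 * stdPdf x) (Ioi c) := i0.const_mul (c ^ 2)
      rw [← integral_sub i2 (i1.const_mul (2 * c)), ← integral_add iS iC]
      exact integral_congr_ae (Filter.Eventually.of_forall (fun x => by ring))
    rw [this, tail_x2, integral_const_mul, integral_const_mul, tail_x, e1]
    ring
  -- R > 0
  have hR_pos : 0 < (1 + c ^ 2) * q - c * p := by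
    rw [← hR]
    rw [setIntegral_pos_iff_support_of_nonneg_ae
      (Filter.Eventually.of_forall
        (fun x => mul_nonneg (sq_nonneg _) (stdPdf_pos x).le)) iR]
    have hsub : Ioi c ⊆ (Function.support fun x => (x - c) ^ 2 * stdPdf x) ∩ Ioi c := by
      intro x hx
      refine ⟨?_, hx⟩
      have hx' : c < x := hx
      have h1 : (0:ℝ) < (x - c) ^ 2 := pow_pos (sub_pos.2 hx') 2
      exact (mul_pos h1 (stdPdf_pos x)).ne'
    calc (0:ENNReal) < volume (Ioi c) := by simp [Real.volume_Ioi]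
      _ ≤ _ := measure_mono hsub
  -- Cauchy–Schwarz: B² ≤ q R  (via nonnegativity of a quadratic in λ)
  have hCS : (p - c * q) ^ 2 ≤ q * ((1 + c ^ 2) * q - c * p) := by
    have key : ∀ lam : ℝ, 0 ≤ q * (lam * lam) +
        (-2 * (p - c * q)) * lam + ((1 + c ^ 2) * q - c * p) := by
      intro lam
      have h0 : 0 ≤ ∫ x in Ioi c, ((x - c) - lam) ^ 2 * stdPdf x :=
        setIntegral_nonneg measurableSet_Ioi
          (fun x _ => mul_nonneg (sq_nonneg _) (stdPdf_pos x).le)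
      have hexp : ∫ x in Ioi c, ((x - c) - lam) ^ 2 * stdPdf x
          = ((∫ x in Ioi c, (x - c) ^ 2 * stdPdf x)
              - ∫ x in Ioi c, (2 * lam) * ((x - c) * stdPdf x))
            + ∫ x in Ioi c, lam ^ 2 * stdPdf x := by
        have iS : IntegrableOn (fun x => (x - c) ^ 2 * stdPdf x - 2 * lam * ((x - c) * stdPdf x))
            (Ioi c) := iR.sub (iB.const_mul (2 * lam))
        have iC : IntegrableOn (fun x : ℝ => lam ^ 2 * stdPdf x) (Ioi c) :=
          i0.const_mul (lam ^ 2)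
        rw [← integral_sub iR (iB.const_mul (2 * lam)), ← integral_add iS iC]
        exact integral_congr_ae (Filter.Eventually.of_forall (fun x => by ring))
      rw [hexp, integral_const_mul, integral_const_mul, hR, hB, e1] at h0
      nlinarith [h0]
    have hd := discrim_le_zero key
    rw [discrim] at hd
    nlinarith [hd]
  -- the middle mass: ∫_{(-c,c]} φ = 1 - 2q
  have hmid : ∫ x in Ioc (-c) c, stdPdf x = 1 - 2 * q := by
    have h1 : (∫ x in Iic c, stdPdf x) + ∫ x in Ioi c, stdPdf x = 1 := by
      rw [intervalIntegral.integral_Iic_add_Ioi int_pdf.integrableOn int_pdf.integrableOn, total_pdf]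
    have h2 : (∫ x in Iic c, stdPdf x) - ∫ x in Iic (-c), stdPdf x
        = ∫ x in Ioc (-c) c, stdPdf x := by
      rw [intervalIntegral.integral_Iic_sub_Iic int_pdf.integrableOn int_pdf.integrableOn,
        intervalIntegral.integral_of_le (by linarith)]
    have h3 : (∫ x in Iic (-c), stdPdf x) = q := hq_def.symm ▸ rfl
    rw [e1] at h1
    rw [← h2, h3]
    linarith
  -- strict inequality: 1 - 2q > 2 c p
  have hd1 : 2 * c * p < 1 - 2 * q := by
    rw [← hmid]
    have hIOcvol : volume (Ioc (-c) c) = ENNReal.ofReal (2 * c) := by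
      rw [Real.volume_Ioc]; ring_nf
    have i0' : IntegrableOn stdPdf (Ioc (-c) c) := int_pdf.integrableOn
    have hconst : IntegrableOn (fun _ : ℝ => p) (Ioc (-c) c) := by
      refine integrableOn_const (ne_of_lt ?_)
      rw [hIOcvol]; exact ENNReal.ofReal_lt_top
    have iSub : IntegrableOn (fun x => stdPdf x - p) (Ioc (-c) c) := i0'.sub hconst
    have hpos : 0 < ∫ x in Ioc (-c) c, (stdPdf x - p) := by
      rw [setIntegral_pos_iff_support_of_nonneg_ae ?nn iSub]
      case nn =>
        filter_upwards [ae_restrict_mem measurableSet_Ioc] with x hx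
        have : stdPdf c ≤ stdPdf x := stdPdf_anti (by nlinarith [hx.1, hx.2])
        simpa [hp_def] using sub_nonneg.2 this
      case _ =>
        have hsub : Ioo (-c) c ⊆
            (Function.support fun x => stdPdf x - p) ∩ Ioc (-c) c := by
          intro x hx
          obtain ⟨hx1, hx2⟩ := hx
          refine ⟨?_, ⟨hx1, hx2.le⟩⟩
          have h1 : stdPdf c < stdPdf x := stdPdf_anti_strict (by nlinarith)
          have h2 : 0 < stdPdf x - p := by rw [hp_def]; linarith
          exact h2.ne'
        calc (0:ENNReal) < volume (Ioo (-c) c) := by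
              rw [Real.volume_Ioo]
              simp only [ENNReal.ofReal_pos]
              linarith
          _ ≤ _ := measure_mono hsub
    have hsplit : ∫ x in Ioc (-c) c, (stdPdf x - p)
        = (∫ x in Ioc (-c) c, stdPdf x) - 2 * c * p := by
      rw [integral_sub i0' hconst, setIntegral_const, measureReal_def, hIOcvol,
        ENNReal.toReal_ofReal (by linarith), smul_eq_mul]
    rw [hsplit] at hpos
    linarith
  -- final algebra
  have hgoal : (1 - 2 * q) ^ 2 < 1 - 2 * c * p + 2 * (c ^ 2 - 1) * q := by
    nlinarith [mul_pos (show (0:ℝ) < 1 - 2 * q - 2 * c * p by linarith) hR_pos,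
      mul_nonneg (sq_nonneg c) (sub_nonneg.2 hCS)]
  refine ⟨hgoal, ?_⟩
  have hden : 0 < (1 - 2 * q) ^ 2 := by
    have h1 : 0 < 1 - 2 * q := by nlinarith
    positivity
  rw [huberVar, ← hq_def, ← hp_def]
  rw [lt_div_iff₀ hden]
  nlinarith [hgoal]
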